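/- arXiv:2003.07285 — 3 statements merged into one kernel-verified Lean document; each statement's English description precedes it below -/
import Mathlib

section
/- Let s be the concatenation of strings s_1, s_2, …, s_k and let s̄ be the concatenation of strings s̄_1, s̄_2, …, s̄_l. Then the length of the longest common subsequence of s and s̄ is at most (k + l) · max_{i ∈ [k], j ∈ [l]} |lcs(s_i, s̄_j)|. -/
/-- `lcsLen u v` is the length of a longest common subsequence of the strings
(lists) `u` and `v`: the maximum length of a list that is a sublist
(not necessarily contiguous subsequence) of both `u` and `v`. -/
def lcsLen {α : Type*} [DecidableEq α] (u v : List α) : ℕ :=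
  ((u.sublists.filter (fun t => decide (t.Sublist v))).map List.length).foldr max 0

private lemma foldr_max_le (L : List ℕ) (n : ℕ) (h : ∀ x ∈ L, x ≤ n) :
    L.foldr max 0 ≤ n := by
  induction L with
  | nil => simp
  | cons a L ih =>
    simp only [List.foldr_cons, max_le_iff]
    exact ⟨h a (by simp), ih fun x hx => h x (by simp [hx])⟩

private lemma le_foldr_max {a : ℕ} {L : List ℕ} (h : a ∈ L) : a ≤ L.foldr max 0 := by
  induction L with
  | nil => simp at h
  | cons b L ih =>
    simp only [List.foldr_cons]
    rcases List.mem_cons.mp h with h | h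
    · exact h ▸ le_max_left _ _
    · exact le_trans (ih h) (le_max_right _ _)

private lemma le_lcsLen {α : Type*} [DecidableEq α] {t u v : List α}
    (hu : t.Sublist u) (hv : t.Sublist v) : t.length ≤ lcsLen u v := by
  apply le_foldr_max
  simp only [List.mem_map]
  exact ⟨t, List.mem_filter.mpr ⟨List.mem_sublists.mpr hu, by simpa using hv⟩, rfl⟩

private lemma lcsLen_le {α : Type*} [DecidableEq α] {u v : List α} {n : ℕ}
    (h : ∀ t : List α, t.Sublist u → t.Sublist v → t.length ≤ n) :
    lcsLen u v ≤ n := by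
  apply foldr_max_le
  intro x hx
  simp only [List.mem_map, List.mem_filter, List.mem_sublists, decide_eq_true_eq] at hx
  obtain ⟨t, ⟨h1, h2⟩, rfl⟩ := hx
  exact h t h1 h2

private theorem lcs_main {α : Type*} [DecidableEq α] (M : ℕ) :
    ∀ (ss tt : List (List α)) (t : List α),
      (∀ a ∈ ss, ∀ b ∈ tt, lcsLen a b ≤ M) →
      t.Sublist ss.flatten → t.Sublist tt.flatten →
      t.length ≤ (ss.length + tt.length) * M
  | [], _, t, _, h1, _ => by
      simp only [List.flatten_nil, List.sublist_nil] at h1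
      simp [h1]
  | a :: ss, [], t, _, _, h2 => by
      simp only [List.flatten_nil, List.sublist_nil] at h2
      simp [h2]
  | a :: ss, b :: tt, t, hM, h1, h2 => by
      rw [List.flatten_cons] at h1 h2
      obtain ⟨t1, t2, rfl, ht1, ht2⟩ := List.sublist_append_iff.mp h1
      obtain ⟨u1, u2, heq, hu1, hu2⟩ := List.sublist_append_iff.mp h2
      rcases le_total t1.length u1.length with hle | hle
      · -- t1 is a prefix of u1, hence a sublist of b
        have hpre : t1 <+: u1 :=
          List.prefix_of_prefix_length_le ⟨t2, rfl⟩ ⟨u2, heq.symm⟩ hle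
        have h1b : t1.Sublist b := hpre.sublist.trans hu1
        have hlen1 : t1.length ≤ M :=
          le_trans (le_lcsLen ht1 h1b) (hM a (by simp) b (by simp))
        have h2tt : t2.Sublist (b :: tt).flatten := by
          have : t2 <:+ t1 ++ t2 := ⟨t1, rfl⟩
          exact this.sublist.trans (by rw [List.flatten_cons]; exact h2)
        have hrec := lcs_main M ss (b :: tt) t2
          (fun x hx y hy => hM x (by simp [hx]) y hy) ht2 h2tt
        simp only [List.length_append, List.length_cons]
        calc t1.length + t2.length ≤ M + (ss.length + (tt.length + 1)) * M :=
              Nat.add_le_add hlen1 hrec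
          _ = (ss.length + 1 + (tt.length + 1)) * M := by ring
      · have hpre : u1 <+: t1 :=
          List.prefix_of_prefix_length_le ⟨u2, heq.symm⟩ ⟨t2, rfl⟩ hle
        have h1a : u1.Sublist a := hpre.sublist.trans ht1
        have hlen1 : u1.length ≤ M :=
          le_trans (le_lcsLen h1a hu1) (hM a (by simp) b (by simp))
        have h2ss : u2.Sublist (a :: ss).flatten := by
          have : u2 <:+ u1 ++ u2 := ⟨u1, rfl⟩
          rw [← heq] at this
          exact this.sublist.trans (by rw [List.flatten_cons]; exact h1)
        have hrec := lcs_main M (a :: ss) tt u2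
          (fun x hx y hy => hM x hx y (by simp [hy])) h2ss hu2
        have : (t1 ++ t2).length = u1.length + u2.length := by
          rw [heq]; simp
        rw [this]
        simp only [List.length_cons] at hrec ⊢
        calc u1.length + u2.length ≤ M + (ss.length + 1 + tt.length) * M :=
              Nat.add_le_add hlen1 hrec
          _ = (ss.length + 1 + (tt.length + 1)) * M := by ring
  termination_by ss tt _ => ss.length + tt.length

/-- Let `s` be the concatenation of strings `s_1, …, s_k` and `s̄` the
concatenation of strings `s̄_1, …, s̄_l`. Then
`|lcs(s, s̄)| ≤ (k + l) · max_{i,j} |lcs(s_i, s̄_j)|`. -/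
theorem lcs_concat_le {α : Type*} [DecidableEq α] (k l : ℕ)
    (s : Fin k → List α) (sb : Fin l → List α) :
    lcsLen (List.ofFn s).flatten (List.ofFn sb).flatten ≤
      (k + l) * Finset.univ.sup (fun p : Fin k × Fin l => lcsLen (s p.1) (sb p.2)) := by
  set M := Finset.univ.sup (fun p : Fin k × Fin l => lcsLen (s p.1) (sb p.2)) with hMdef
  apply lcsLen_le
  intro t h1 h2
  have := lcs_main M (List.ofFn s) (List.ofFn sb) t ?_ h1 h2
  · simpa using this
  · intro a ha b hb
    obtain ⟨i, rfl⟩ := List.mem_ofFn.mp ha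
    obtain ⟨j, rfl⟩ := List.mem_ofFn.mp hb
    exact Finset.le_sup (f := fun p : Fin k × Fin l => lcsLen (s p.1) (sb p.2))
      (Finset.mem_univ (i, j))
end

section
/- Let u and v be two strings in each of which no symbol appears more than once, and let C be the set of symbols occurring in both u and v. If every two symbols of C appear in the same relative order in u as in v, then |lcs(u, v)| ≥ |C|. -/
private lemma le_foldr_max_s5 {a : ℕ} : ∀ {l : List ℕ}, a ∈ l → a ≤ l.foldr max 0
  | b :: l, h => by
    rcases List.mem_cons.mp h with rfl | h
    · exact le_max_left _ _
    · exact le_trans (le_foldr_max_s5 h) (le_max_right _ _)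

private lemma length_le_lcsLen {α : Type*} [DecidableEq α] {u v t : List α}
    (htu : t.Sublist u) (htv : t.Sublist v) : t.length ≤ lcsLen u v := by
  apply le_foldr_max_s5
  apply List.mem_map.mpr
  exact ⟨t, List.mem_filter.mpr ⟨List.mem_sublists.mpr htu, decide_eq_true htv⟩, rfl⟩

private lemma pairwise_indexOf_lt {α : Type*} [DecidableEq α] {l : List α} (h : l.Nodup) :
    l.Pairwise (fun a b => l.idxOf a < l.idxOf b) := by
  rw [List.pairwise_iff_getElem]
  intro i j hi hj hij
  rwa [List.Nodup.idxOf_getElem h, List.Nodup.idxOf_getElem h]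

/-- Let `u` and `v` be duplicate-free strings and let `C` be the set of
symbols occurring in both. If every two symbols of `C` appear in the same relative order
in `u` as in `v`, then `|lcs(u, v)| ≥ |C|`. -/
theorem lcs_ge_of_consistent_order {α : Type*} [DecidableEq α]
    (u v : List α) (hu : u.Nodup) (hv : v.Nodup)
    (C : Finset α) (hC : C = u.toFinset ∩ v.toFinset)
    (horder : ∀ c₁ ∈ C, ∀ c₂ ∈ C,
      (u.idxOf c₁ ≤ u.idxOf c₂ ↔ v.idxOf c₁ ≤ v.idxOf c₂)) :
    C.card ≤ lcsLen u v := by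
  set w : List α := u.filter (fun a => a ∈ C) with hw
  set w' : List α := v.filter (fun a => a ∈ C) with hw'
  have hwu : w.Sublist u := List.filter_sublist
  have hw'v : w'.Sublist v := List.filter_sublist
  have hwn : w.Nodup := hwu.nodup hu
  have hw'n : w'.Nodup := hw'v.nodup hv
  have hmemw : ∀ a, a ∈ w ↔ a ∈ C := by
    intro a
    simp only [hw, List.mem_filter, decide_eq_true_eq]
    constructor
    · exact fun h => h.2
    · intro h
      refine ⟨?_, h⟩
      have := hC ▸ h
      exact List.mem_toFinset.mp (Finset.mem_inter.mp this).1
  have hmemw' : ∀ a, a ∈ w' ↔ a ∈ C := by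
    intro a
    simp only [hw', List.mem_filter, decide_eq_true_eq]
    constructor
    · exact fun h => h.2
    · intro h
      refine ⟨?_, h⟩
      have := hC ▸ h
      exact List.mem_toFinset.mp (Finset.mem_inter.mp this).2
  -- the order relation
  set r : α → α → Prop := fun a b => u.idxOf a < u.idxOf b ∨ a = b with hr
  have hanti : ∀ a b, r a b → r b a → a = b := by
    intro a b hab hba
    rcases hab with h | h
    · rcases hba with h' | h'
      · omega
      · exact h'.symm
    · exact h
  have hsw : w.Pairwise r := by
    have := (pairwise_indexOf_lt hu).sublist hwu
    exact this.imp (fun h => Or.inl h)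
  have hsw' : w'.Pairwise r := by
    have hp : w'.Pairwise (fun a b => v.idxOf a < v.idxOf b) :=
      (pairwise_indexOf_lt hv).sublist hw'v
    refine List.Pairwise.imp_of_mem ?_ hp
    intro a b ha hb hab
    left
    have haC : a ∈ C := (hmemw' a).mp ha
    have hbC : b ∈ C := (hmemw' b).mp hb
    have h1 := horder a haC b hbC
    have h2 := horder b hbC a haC
    omega
  have hperm : w.Perm w' := by
    apply List.perm_of_nodup_nodup_toFinset_eq hwn hw'n
    ext a
    simp only [List.mem_toFinset, hmemw, hmemw']
  have heq : w = w' := by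
    haveI : Std.Antisymm r := ⟨hanti⟩
    exact List.Perm.eq_of_pairwise' hsw hsw' hperm
  have hlen : w.length = C.card := by
    rw [← List.toFinset_card_of_nodup hwn]
    congr 1
    ext a
    simp [hmemw a]
  calc C.card = w.length := hlen.symm
    _ ≤ lcsLen u v := length_le_lcsLen hwu (heq ▸ hw'v)
end

section
/- Let Σ be a finite alphabet and let (π_1, σ_1), (π_2, σ_2), …, (π_m, σ_m) be m ≥ 4 pairs of strings, where every π_i and every σ_i is a permutation of Σ. Suppose there is a real d > 0 such that |lcs(π_i, σ_i)| ≥ d for every i ∈ [m]. Then the sum over all ordered pairs (i, j) ∈ [m] × [m] of |lcs(π_i, σ_j)| is at least d^{1/3} · m²/8; equivalently, the average of |lcs(π_i, σ_j)| over all ordered pairs (i, j) is at least d^{1/3}/8. -/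
lemma le_foldr_max_of_mem {a : ℕ} {l : List ℕ} (h : a ∈ l) : a ≤ l.foldr max 0 := by
  induction l with
  | nil => simp at h
  | cons b l ih =>
    rcases List.mem_cons.mp h with rfl | h
    · simp [List.foldr]
    · exact le_trans (ih h) (by simp [List.foldr])

lemma foldr_max_mem (l : List ℕ) : l.foldr max 0 = 0 ∨ l.foldr max 0 ∈ l := by
  induction l with
  | nil => simp
  | cons b l ih =>
    rcases max_choice b (l.foldr max 0) with h | h
    · right; simp [List.foldr, h]
    · rcases ih with h0 | hm
      · simp [List.foldr, h, h0]
      · right; simp [List.foldr, h]; right; exact hm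

lemma length_le_lcsLen_s9 {α : Type*} [DecidableEq α] {u v s : List α}
    (hsu : s.Sublist u) (hsv : s.Sublist v) : s.length ≤ lcsLen u v := by
  apply le_foldr_max_of_mem
  simp only [List.mem_map]
  exact ⟨s, List.mem_filter.mpr ⟨List.mem_sublists.mpr hsu, by simpa using hsv⟩, rfl⟩

lemma exists_lcs {α : Type*} [DecidableEq α] (u v : List α) :
    ∃ s : List α, s.Sublist u ∧ s.Sublist v ∧ s.length = lcsLen u v := by
  have h := foldr_max_mem ((u.sublists.filter (fun t : List α => decide (t.Sublist v))).map List.length)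
  rcases h with h | h
  · exact ⟨[], List.nil_sublist u, List.nil_sublist v, h.symm⟩
  · rw [List.mem_map] at h
    obtain ⟨s, hs, hlen⟩ := h
    rw [List.mem_filter] at hs
    exact ⟨s, List.mem_sublists.mp hs.1, by simpa using hs.2, hlen⟩

lemma pairwise_indexOf {α : Type*} [DecidableEq α] {u : List α} (hu : u.Nodup) :
    u.Pairwise (fun a b => u.idxOf a < u.idxOf b) := by
  induction u with
  | nil => simp
  | cons c u ih =>
    rw [List.nodup_cons] at hu
    refine List.Pairwise.cons ?_ ?_
    · intro b hb
      rw [List.idxOf_cons_self, List.idxOf_cons_ne _ (ne_of_mem_of_not_mem hb hu.1).symm]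
      exact Nat.succ_pos _
    · refine (ih hu.2).imp_of_mem ?_
      intro a b ha hb hab
      rw [List.idxOf_cons_ne _ (ne_of_mem_of_not_mem ha hu.1).symm,
        List.idxOf_cons_ne _ (ne_of_mem_of_not_mem hb hu.1).symm]
      exact Nat.succ_lt_succ hab

lemma filter_mem_length {α : Type*} [DecidableEq α] {u : List α} (hu : u.Nodup) (S : Finset α)
    (hS : ∀ c ∈ S, c ∈ u) : (u.filter (fun c => c ∈ S)).length = S.card := by
  have hnd : (u.filter (fun c => c ∈ S)).Nodup := hu.filter _
  rw [← List.toFinset_card_of_nodup hnd]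
  congr 1
  ext c
  simp only [List.mem_toFinset, List.mem_filter, decide_eq_true_eq]
  exact ⟨fun h => h.2, fun h => ⟨hS c h, h⟩⟩

lemma filter_eq_filter {α : Type*} [DecidableEq α] {u v : List α} (hu : u.Nodup) (hv : v.Nodup)
    (S : Finset α) (hSu : ∀ c ∈ S, c ∈ u) (hSv : ∀ c ∈ S, c ∈ v)
    (hord : ∀ a ∈ S, ∀ b ∈ S, u.idxOf a < u.idxOf b ↔ v.idxOf a < v.idxOf b) :
    u.filter (fun c => c ∈ S) = v.filter (fun c => c ∈ S) := by
  have key : ∀ (w : List α), (∀ c ∈ S, c ∈ w) → (w.filter (fun c => c ∈ S)).toFinset = S := by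
    intro w hw
    ext c
    simp only [List.mem_toFinset, List.mem_filter, decide_eq_true_eq]
    exact ⟨fun h => h.2, fun h => ⟨hw c h, h⟩⟩
  have perm : List.Perm (u.filter (fun c => c ∈ S)) (v.filter (fun c => c ∈ S)) :=
    List.perm_of_nodup_nodup_toFinset_eq (hu.filter _) (hv.filter _)
      (by rw [key u hSu, key v hSv])
  haveI inst : IsAntisymm α (fun a b => v.idxOf a < v.idxOf b) :=
    ⟨fun a b h1 h2 => absurd (h1.trans h2) (lt_irrefl _)⟩
  refine List.Perm.eq_of_pairwise (le := fun a b => v.idxOf a < v.idxOf b) (fun a b _ _ h1 h2 => absurd (h1.trans h2) (lt_irrefl _)) ?_ ?_ perm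
  · have hp : (u.filter (fun c => c ∈ S)).Pairwise (fun a b => u.idxOf a < u.idxOf b) :=
      List.Pairwise.sublist (List.filter_sublist (l := u)) (pairwise_indexOf hu)
    refine List.Pairwise.imp_of_mem ?_ hp
    intro a b ha hb hab
    have haS : a ∈ S := by simpa using (List.mem_filter.mp ha).2
    have hbS : b ∈ S := by simpa using (List.mem_filter.mp hb).2
    exact (hord a haS b hbS).mp hab
  · exact List.Pairwise.sublist (List.filter_sublist (l := v)) (pairwise_indexOf hv)

lemma indexOf_get_lt {α : Type*} [DecidableEq α] {u w : List α} (hu : u.Nodup) (hw : w.Sublist u)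
    (i j : Fin w.length) :
    i < j ↔ u.idxOf (w.get i) < u.idxOf (w.get j) := by
  have hp := List.pairwise_iff_get.mp (List.Pairwise.sublist hw (pairwise_indexOf hu))
  constructor
  · exact hp i j
  · intro h
    rcases lt_trichotomy i j with h' | h' | h'
    · exact h'
    · rw [h'] at h; exact absurd h (lt_irrefl _)
    · exact absurd h (not_lt.mpr (le_of_lt (hp j i h')))

lemma card_le_lcsLen {α : Type*} [DecidableEq α] {p r : List α} (hp : p.Nodup) (hr : r.Nodup)
    (S : Finset α) (hSp : ∀ c ∈ S, c ∈ p) (hSr : ∀ c ∈ S, c ∈ r)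
    (hord : ∀ a ∈ S, ∀ b ∈ S, (p.idxOf a < p.idxOf b ↔ r.idxOf a < r.idxOf b)) :
    S.card ≤ lcsLen p r := by
  have heq := filter_eq_filter hp hr S hSp hSr hord
  have h1 : (p.filter (fun c => c ∈ S)).Sublist p := List.filter_sublist (l := p)
  have h2 : (p.filter (fun c => c ∈ S)).Sublist r := heq ▸ List.filter_sublist (l := r)
  have h3 := length_le_lcsLen_s9 h1 h2
  rwa [filter_mem_length hp S hSp] at h3

section ErdosSzekeres
open Function Finset
/-- Erdős–Szekeres (copied from Mathlib's Archive, `Theorems100.erdos_szekeres`). -/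
theorem my_erdos_szekeres {α : Type*} [LinearOrder α] {r s n : ℕ} {f : Fin n → α}
    (hn : r * s < n) (hf : Injective f) :
    (∃ t : Finset (Fin n), r < #t ∧ StrictMonoOn f ↑t) ∨
      ∃ t : Finset (Fin n), s < #t ∧ StrictAntiOn f ↑t := by
  -- Given an index `i`, produce the set of increasing (resp., decreasing) subsequences which ends
  -- at `i`.
  let inc_sequences_ending_in : Fin n → Finset (Finset (Fin n)) := fun i =>
    univ.powerset.filter fun t => Finset.max t = i ∧ StrictMonoOn f ↑t
  let dec_sequences_ending_in : Fin n → Finset (Finset (Fin n)) := fun i =>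
    univ.powerset.filter fun t => Finset.max t = i ∧ StrictAntiOn f ↑t
  -- The singleton sequence is in both of the above collections.
  -- (This is useful to show that the maximum length subsequence is at least 1, and that the set
  -- of subsequences is nonempty.)
  have inc_i : ∀ i, {i} ∈ inc_sequences_ending_in i := fun i => by
    simp [inc_sequences_ending_in, StrictMonoOn]
  have dec_i : ∀ i, {i} ∈ dec_sequences_ending_in i := fun i => by
    simp [dec_sequences_ending_in, StrictAntiOn]
  -- Define the pair of labels: at index `i`, the pair is the maximum length of an increasing
  -- subsequence ending at `i`, paired with the maximum length of a decreasing subsequence ending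
  -- at `i`.
  -- We call these labels `(a_i, b_i)`.
  let ab' : Fin n → ℕ × ℕ := by
    intro i
    apply
      (max' ((inc_sequences_ending_in i).image card) (Nonempty.image ⟨{i}, inc_i i⟩ _),
        max' ((dec_sequences_ending_in i).image card) (Nonempty.image ⟨{i}, dec_i i⟩ _))
  -- Porting note: it costs many resources to unfold `ab'` so we obscure the definition:
  generalize hab : ab' = ab
  -- It now suffices to show that one of the labels is 'big' somewhere. In particular, if the
  -- first in the pair is more than `r` somewhere, then we have an increasing subsequence in our
  -- set, and if the second is more than `s` somewhere, then we have a decreasing subsequence.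
  rsuffices ⟨i, hi⟩ : ∃ i, r < (ab i).1 ∨ s < (ab i).2
  · refine Or.imp ?_ ?_ hi
    on_goal 1 =>
      have : (ab i).1 ∈ image card (inc_sequences_ending_in i) := by
        simp only [← hab]; exact max'_mem _ (Nonempty.image ⟨{i}, inc_i i⟩ _)
    on_goal 2 =>
      have : (ab i).2 ∈ image card (dec_sequences_ending_in i) := by
        simp only [← hab]; exact max'_mem _ (Nonempty.image ⟨{i}, dec_i i⟩ _)
    all_goals
      intro hi
      rw [mem_image] at this
      obtain ⟨t, ht₁, ht₂⟩ := this
      refine ⟨t, by rwa [ht₂], ?_⟩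
      rw [mem_filter] at ht₁
      apply ht₁.2.2
  -- Show first that the pair of labels is unique.
  have : Injective ab := by
    simp only [← hab]
    apply Injective.of_lt_imp_ne
    intro i j k q
    injection q with q₁ q₂
    -- We have two cases: `f i < f j` or `f j < f i`.
    -- In the former we'll show `a_i < a_j`, and in the latter we'll show `b_i < b_j`.
    cases lt_or_gt_of_ne fun _ => ne_of_lt ‹i < j› (hf ‹f i = f j›)
    on_goal 1 =>
      apply ne_of_lt _ q₁
      have : (ab' i).1 ∈ image card (inc_sequences_ending_in i) := by exact max'_mem _ (Nonempty.image ⟨{i}, inc_i i⟩ _)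
    on_goal 2 =>
      apply ne_of_lt _ q₂
      have : (ab' i).2 ∈ image card (dec_sequences_ending_in i) := by exact max'_mem _ (Nonempty.image ⟨{i}, dec_i i⟩ _)
    all_goals
      -- Reduce to showing there is a subsequence of length `a_i + 1` which ends at `j`.
      rw [Nat.lt_iff_add_one_le]
      apply le_max'
      rw [mem_image] at this ⊢
      -- In particular we take the subsequence `t` of length `a_i` which ends at `i`, by definition
      -- of `a_i`
      rcases this with ⟨t, ht₁, ht₂⟩
      rw [mem_filter] at ht₁
      -- Ensure `t` ends at `i`.
      have : t.max = i := by simp only [ht₁.2.1]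
      -- Now our new subsequence is given by adding `j` at the end of `t`.
      refine ⟨insert j t, ?_, ?_⟩
      -- First make sure it's valid, i.e., that this subsequence ends at `j` and is increasing
      · rw [mem_filter]
        refine ⟨?_, ?_, ?_⟩
        · rw [mem_powerset]; apply subset_univ
        -- It ends at `j` since `i < j`.
        · convert max_insert (a := j) (s := t)
          rw [ht₁.2.1, max_eq_left]
          apply WithBot.coe_le_coe.mpr (le_of_lt ‹i < j›)
        -- To show it's increasing (i.e., `f` is monotone increasing on `t.insert j`), we do cases
        -- on what the possibilities could be - either in `t` or equals `j`.
        simp only [StrictMonoOn, StrictAntiOn, coe_insert, Set.mem_insert_iff, mem_coe]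
        -- Most of the cases are just bashes.
        rintro x ⟨rfl | _⟩ y ⟨rfl | _⟩ _
        · apply (irrefl _ ‹j < j›).elim
        · exfalso
          apply not_le_of_gt (_root_.trans ‹i < j› ‹j < y›) (le_max_of_eq ‹y ∈ t› ‹t.max = i›)
        · first
          | apply lt_of_le_of_lt _ ‹f i < f j›
          | apply lt_of_lt_of_le ‹f j < f i› _
          rcases lt_or_eq_of_le (le_max_of_eq ‹x ∈ t› ‹t.max = i›) with (_ | rfl)
          · apply le_of_lt (ht₁.2.2 ‹x ∈ t› (mem_of_max ‹t.max = i›) ‹x < i›)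
          · rfl
        · apply ht₁.2.2 ‹x ∈ t› ‹y ∈ t› ‹x < y›
      -- Finally show that this new subsequence is one longer than the old one.
      · rw [card_insert_of_notMem, ht₂]
        intro
        apply not_le_of_gt ‹i < j› (le_max_of_eq ‹j ∈ t› ‹t.max = i›)
  -- Finished both goals!
  -- Now that we have uniqueness of each label, it remains to do some counting to finish off.
  -- Suppose all the labels are small.
  by_contra! q
  -- Then the labels `(a_i, b_i)` all fit in the following set: `{ (x,y) | 1 ≤ x ≤ r, 1 ≤ y ≤ s }`
  let ran : Finset (ℕ × ℕ) := (range r).image Nat.succ ×ˢ (range s).image Nat.succ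
  -- which we prove here.
  have : image ab univ ⊆ ran := by
    -- First some logical shuffling
    rintro ⟨x₁, x₂⟩
    simp only [ran, mem_image, exists_prop, mem_range, mem_univ, mem_product, true_and,
      Prod.ext_iff]
    rintro ⟨i, rfl, rfl⟩
    specialize q i
    -- Show `1 ≤ a_i` and `1 ≤ b_i`, which is easy from the fact that `{i}` is an increasing and
    -- decreasing subsequence which we did right near the top.
    have z : 1 ≤ (ab i).1 ∧ 1 ≤ (ab i).2 := by
      simp only [← hab]
      constructor <;>
        · apply le_max'
          rw [mem_image]
          exact ⟨{i}, by solve_by_elim, card_singleton i⟩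
    -- Need to get `a_i ≤ r`, here phrased as: there is some `a < r` with `a+1 = a_i`.
    exact ⟨⟨(ab i).1 - 1, by omega⟩, (ab i).2 - 1, by omega⟩
  -- To get our contradiction, it suffices to prove `n ≤ r * s`
  apply not_le_of_gt hn
  -- Which follows from considering the cardinalities of the subset above, since `ab` is injective.
  simpa [ran, Nat.succ_injective, card_image_of_injective, ‹Injective ab›] using card_le_card this

end ErdosSzekeres

lemma lemma10 {α : Type*} [DecidableEq α] {x y z t : List α} (hx : x.Nodup) (hy : y.Nodup) (hz : z.Nodup) (ht : t.Nodup)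
    (hxy : ∀ c ∈ x, c ∈ y) (hxz : ∀ c ∈ x, c ∈ z) :
    lcsLen x t ≤ lcsLen x y * (lcsLen z y * lcsLen z t) := by
  by_contra hcon
  push_neg at hcon
  obtain ⟨w, hwx, hwt, hwl⟩ := exists_lcs x t
  have hwnd : w.Nodup := List.Nodup.sublist hwx hx
  have hwX : ∀ c ∈ w, c ∈ x := fun c hc => hwx.subset hc
  have hgetinj : Function.Injective w.get := List.nodup_iff_injective_get.mp hwnd
  set f : Fin w.length → ℕ := fun i => y.idxOf (w.get i) with hf_def
  have hf : Function.Injective f := by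
    intro i j hij
    exact hgetinj ((List.idxOf_inj (hxy _ (hwX _ (List.get_mem w i)))).mp hij)
  have hn1 : lcsLen x y * (lcsLen z y * lcsLen z t) < w.length := by omega
  rcases my_erdos_szekeres hn1 hf with ⟨t₁, ht₁card, ht₁mono⟩ | ⟨t₁, ht₁card, ht₁anti⟩
  · -- increasing: common subsequence of x and y
    set S : Finset α := t₁.image w.get with hS_def
    have hScard : S.card = t₁.card := Finset.card_image_of_injOn hgetinj.injOn
    have hSx : ∀ c ∈ S, c ∈ x := by
      intro c hc; obtain ⟨i, _, rfl⟩ := Finset.mem_image.mp hc; exact hwX _ (List.get_mem w i)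
    have hSy : ∀ c ∈ S, c ∈ y := fun c hc => hxy c (hSx c hc)
    have hord : ∀ a ∈ S, ∀ b ∈ S, (x.idxOf a < x.idxOf b ↔ y.idxOf a < y.idxOf b) := by
      intro a ha b hb
      obtain ⟨i, hi, rfl⟩ := Finset.mem_image.mp ha
      obtain ⟨j, hj, rfl⟩ := Finset.mem_image.mp hb
      rw [← indexOf_get_lt hx hwx i j]
      have := ht₁mono.lt_iff_lt (Finset.mem_coe.mpr hi) (Finset.mem_coe.mpr hj)
      rw [show y.idxOf (w.get i) = f i from rfl, show y.idxOf (w.get j) = f j from rfl, this]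
    have hle := card_le_lcsLen hx hy S hSx hSy hord
    rw [hScard] at hle
    omega
  · -- decreasing: y-order reversed
    set S₁ : Finset α := t₁.image w.get with hS₁_def
    have hS₁card : S₁.card = t₁.card := Finset.card_image_of_injOn hgetinj.injOn
    have hS₁x : ∀ c ∈ S₁, c ∈ x := by
      intro c hc; obtain ⟨i, _, rfl⟩ := Finset.mem_image.mp hc; exact hwX _ (List.get_mem w i)
    have hS₁rev : ∀ a ∈ S₁, ∀ b ∈ S₁,
        (x.idxOf a < x.idxOf b ↔ y.idxOf b < y.idxOf a) := by
      intro a ha b hb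
      obtain ⟨i, hi, rfl⟩ := Finset.mem_image.mp ha
      obtain ⟨j, hj, rfl⟩ := Finset.mem_image.mp hb
      rw [← indexOf_get_lt hx hwx i j]
      rw [show y.idxOf (w.get i) = f i from rfl, show y.idxOf (w.get j) = f j from rfl]
      exact (ht₁anti.lt_iff_gt (Finset.mem_coe.mpr hj) (Finset.mem_coe.mpr hi)).symm
    set w₂ : List α := w.filter (fun c => c ∈ S₁) with hw₂_def
    have hw₂w : w₂.Sublist w := List.filter_sublist (l := w)
    have hw₂x : w₂.Sublist x := hw₂w.trans hwx
    have hw₂t : w₂.Sublist t := hw₂w.trans hwt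
    have hw₂nd : w₂.Nodup := List.Nodup.sublist hw₂w hwnd
    have hw₂X : ∀ c ∈ w₂, c ∈ x := fun c hc => hw₂x.subset hc
    have hw₂S₁ : ∀ c ∈ w₂, c ∈ S₁ := by
      intro c hc
      simpa using (List.mem_filter.mp hc).2
    have hw₂len : w₂.length = S₁.card := by
      apply filter_mem_length hwnd
      intro c hc; obtain ⟨i, _, rfl⟩ := Finset.mem_image.mp hc; exact List.get_mem w i
    have hget2inj : Function.Injective w₂.get := List.nodup_iff_injective_get.mp hw₂nd
    set g : Fin w₂.length → ℕ := fun i => z.idxOf (w₂.get i) with hg_def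
    have hg : Function.Injective g := by
      intro i j hij
      exact hget2inj ((List.idxOf_inj (hxz _ (hw₂X _ (List.get_mem w₂ i)))).mp hij)
    have hn2 : lcsLen z t * lcsLen z y < w₂.length := by
      rw [hw₂len, hS₁card]
      have h1 : lcsLen x y * (lcsLen z y * lcsLen z t) < w.length := hn1
      nlinarith [Nat.zero_le (lcsLen x y), ht₁card]
    rcases my_erdos_szekeres hn2 hg with ⟨t₂, ht₂card, ht₂mono⟩ | ⟨t₂, ht₂card, ht₂anti⟩
    · -- common subsequence of z and t
      set S₂ : Finset α := t₂.image w₂.get with hS₂_def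
      have hS₂card : S₂.card = t₂.card := Finset.card_image_of_injOn hget2inj.injOn
      have hS₂z : ∀ c ∈ S₂, c ∈ z := by
        intro c hc; obtain ⟨i, _, rfl⟩ := Finset.mem_image.mp hc
        exact hxz _ (hw₂X _ (List.get_mem w₂ i))
      have hS₂t : ∀ c ∈ S₂, c ∈ t := by
        intro c hc; obtain ⟨i, _, rfl⟩ := Finset.mem_image.mp hc
        exact hwt.subset (hw₂w.subset (List.get_mem w₂ i))
      have hord : ∀ a ∈ S₂, ∀ b ∈ S₂, (z.idxOf a < z.idxOf b ↔ t.idxOf a < t.idxOf b) := by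
        intro a ha b hb
        obtain ⟨i, hi, rfl⟩ := Finset.mem_image.mp ha
        obtain ⟨j, hj, rfl⟩ := Finset.mem_image.mp hb
        rw [← indexOf_get_lt ht hw₂t i j]
        have := ht₂mono.lt_iff_lt (Finset.mem_coe.mpr hi) (Finset.mem_coe.mpr hj)
        rw [show z.idxOf (w₂.get i) = g i from rfl, show z.idxOf (w₂.get j) = g j from rfl, this]
      have hle := card_le_lcsLen hz ht S₂ hS₂z hS₂t hord
      rw [hS₂card] at hle
      omega
    · -- common subsequence of z and y
      set S₂ : Finset α := t₂.image w₂.get with hS₂_def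
      have hS₂card : S₂.card = t₂.card := Finset.card_image_of_injOn hget2inj.injOn
      have hS₂z : ∀ c ∈ S₂, c ∈ z := by
        intro c hc; obtain ⟨i, _, rfl⟩ := Finset.mem_image.mp hc
        exact hxz _ (hw₂X _ (List.get_mem w₂ i))
      have hS₂y : ∀ c ∈ S₂, c ∈ y := by
        intro c hc; obtain ⟨i, _, rfl⟩ := Finset.mem_image.mp hc
        exact hxy _ (hw₂X _ (List.get_mem w₂ i))
      have hord : ∀ a ∈ S₂, ∀ b ∈ S₂, (z.idxOf a < z.idxOf b ↔ y.idxOf a < y.idxOf b) := by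
        intro a ha b hb
        obtain ⟨i, hi, rfl⟩ := Finset.mem_image.mp ha
        obtain ⟨j, hj, rfl⟩ := Finset.mem_image.mp hb
        have h1 : z.idxOf (w₂.get i) < z.idxOf (w₂.get j) ↔ j < i := by
          rw [show z.idxOf (w₂.get i) = g i from rfl, show z.idxOf (w₂.get j) = g j from rfl]
          exact ht₂anti.lt_iff_gt (Finset.mem_coe.mpr hi) (Finset.mem_coe.mpr hj)
        have h2 : (j < i) ↔ x.idxOf (w₂.get j) < x.idxOf (w₂.get i) :=
          indexOf_get_lt hx hw₂x j i
        have h3 := hS₁rev _ (hw₂S₁ _ (List.get_mem w₂ j)) _ (hw₂S₁ _ (List.get_mem w₂ i))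
        rw [h1, h2, h3]
      have hle := card_le_lcsLen hz hy S₂ hS₂z hS₂y hord
      rw [hS₂card] at hle
      omega

/-- **deterministic core of Lemma 11.** Let `Σ` be a finite alphabet and
`(π_1, σ_1), …, (π_m, σ_m)` be `m ≥ 4` pairs of permutations of `Σ`. If `d > 0` is a
real with `|lcs(π_i, σ_i)| ≥ d` for every `i`, then
`∑_{(i,j) ∈ [m]×[m]} |lcs(π_i, σ_j)| ≥ d^{1/3} · m² / 8`. -/
theorem sum_lcs_pairs_ge {α : Type*} [Fintype α] [DecidableEq α]
    (m : ℕ) (hm : 4 ≤ m)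
    (π σ : Fin m → List α)
    (hπnd : ∀ i, (π i).Nodup) (hπall : ∀ i, ∀ c : α, c ∈ π i)
    (hσnd : ∀ i, (σ i).Nodup) (hσall : ∀ i, ∀ c : α, c ∈ σ i)
    (d : ℝ) (hd : 0 < d)
    (hdiag : ∀ i : Fin m, d ≤ (lcsLen (π i) (σ i) : ℝ)) :
    d ^ ((1 : ℝ) / 3) * (m : ℝ) ^ 2 / 8 ≤
      ∑ i : Fin m, ∑ j : Fin m, (lcsLen (π i) (σ j) : ℝ) := by
  classical
  set q : ℝ := d ^ ((1 : ℝ) / 3) with hq_def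
  have hq0 : 0 ≤ q := Real.rpow_nonneg hd.le _
  have hq3 : q * (q * q) = d := by
    have h1 : q * (q * q) = (d ^ ((1 : ℝ) / 3)) ^ (3 : ℕ) := by rw [hq_def]; ring
    rw [h1, ← Real.rpow_natCast (d ^ ((1 : ℝ) / 3)) 3, ← Real.rpow_mul hd.le]
    norm_num
  set Q : Fin m → Fin m → Prop := fun i j => q ≤ (lcsLen (π i) (σ j) : ℝ) with hQ_def
  have triple : ∀ i j k : Fin m, Q i j ∨ Q k j ∨ Q k i := by
    intro i j k
    by_contra hc
    push_neg at hc
    obtain ⟨h1, h2, h3⟩ := hc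
    simp only [hQ_def, not_le] at h1 h2 h3
    have hnat := lemma10 (hπnd i) (hσnd j) (hπnd k) (hσnd i)
      (fun c _ => hσall j c) (fun c _ => hπall k c)
    have hreal : (lcsLen (π i) (σ i) : ℝ) ≤
        (lcsLen (π i) (σ j) : ℝ) * ((lcsLen (π k) (σ j) : ℝ) * (lcsLen (π k) (σ i) : ℝ)) := by
      exact_mod_cast hnat
    have c1 : (0:ℝ) ≤ (lcsLen (π i) (σ j) : ℝ) := Nat.cast_nonneg _
    have c2 : (0:ℝ) ≤ (lcsLen (π k) (σ j) : ℝ) := Nat.cast_nonneg _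
    have c3 : (0:ℝ) ≤ (lcsLen (π k) (σ i) : ℝ) := Nat.cast_nonneg _
    have p1 : (lcsLen (π i) (σ j) : ℝ) * ((lcsLen (π k) (σ j) : ℝ) * (lcsLen (π k) (σ i) : ℝ))
        < q * (q * q) :=
      mul_lt_mul'' h1 (mul_lt_mul'' h2 h3 c2 c3) c1 (mul_nonneg c2 c3)
    have := hdiag i
    rw [hq3] at p1
    linarith
  -- counting
  set F : Fin m → Finset (Fin m) := fun i => Finset.univ.filter (fun j => Q i j ∨ Q j i) with hF_def
  set G : Fin m → Finset (Fin m) := fun i => Finset.univ.filter (fun j => ¬(Q i j ∨ Q j i)) with hG_def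
  have hFG : ∀ i, (F i).card + (G i).card = m := by
    intro i
    rw [hF_def, hG_def]
    simpa using Finset.card_filter_add_card_filter_not
      (s := (Finset.univ : Finset (Fin m))) (p := fun j => Q i j ∨ Q j i)
  have hne : (Finset.univ : Finset (Fin m)).Nonempty := ⟨⟨0, by omega⟩, Finset.mem_univ _⟩
  obtain ⟨i0, -, hmax⟩ := Finset.exists_max_image Finset.univ (fun i => (G i).card) hne
  set s : ℕ := (G i0).card with hs_def
  have hsmax : ∀ i, (G i).card ≤ s := fun i => hmax i (Finset.mem_univ i)
  have hGmem : ∀ {i j : Fin m}, j ∈ G i ↔ ¬(Q i j ∨ Q j i) := by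
    intro i j; rw [hG_def]; simp
  have hclique : ∀ j ∈ G i0, ∀ k ∈ G i0, (Q j k ∨ Q k j) := by
    intro j hj k hk
    have hj' := hGmem.mp hj
    have hk' := hGmem.mp hk
    have := triple j i0 k
    tauto
  set NP : ℕ := ∑ i : Fin m, (F i).card with hNP_def
  have hNP1 : s * s ≤ NP := by
    have hsub : ∀ j ∈ G i0, s ≤ (F j).card := by
      intro j hj
      apply Finset.card_le_card
      intro k hk
      rw [hF_def]
      simp only [Finset.mem_filter, Finset.mem_univ, true_and]
      exact hclique j hj k hk
    calc s * s = ∑ _j ∈ G i0, s := by rw [Finset.sum_const, smul_eq_mul, mul_comm]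
    _ ≤ ∑ j ∈ G i0, (F j).card := Finset.sum_le_sum hsub
    _ ≤ ∑ j : Fin m, (F j).card :=
        Finset.sum_le_sum_of_subset (Finset.subset_univ _)
    _ = NP := rfl
  have hNP2 : m * (m - s) ≤ NP := by
    have hterm : ∀ i : Fin m, m - s ≤ (F i).card := by
      intro i
      have h1 := hFG i
      have h2 := hsmax i
      omega
    calc m * (m - s) = ∑ _i : Fin m, (m - s) := by
          rw [Finset.sum_const, smul_eq_mul, Finset.card_univ, Fintype.card_fin]
    _ ≤ ∑ i : Fin m, (F i).card := Finset.sum_le_sum (fun i _ => hterm i)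
    _ = NP := rfl
  have hsm : s ≤ m := by
    have := hFG i0; omega
  have hkey : m * m ≤ 4 * NP := by
    rcases le_or_gt m (2 * s) with h | h
    · calc m * m ≤ (2 * s) * (2 * s) := Nat.mul_le_mul h h
      _ = 4 * (s * s) := by ring
      _ ≤ 4 * NP := Nat.mul_le_mul_left _ hNP1
    · have h2 : m ≤ 2 * (m - s) := by omega
      calc m * m ≤ m * (2 * (m - s)) := Nat.mul_le_mul_left _ h2
      _ = 2 * (m * (m - s)) := by ring
      _ ≤ 2 * NP := Nat.mul_le_mul_left _ hNP2
      _ ≤ 4 * NP := by omega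
  -- NP ≤ 2 * NQ
  set NQ : ℕ := ∑ i : Fin m, (Finset.univ.filter (fun j => Q i j)).card with hNQ_def
  have hswap : ∑ i : Fin m, (Finset.univ.filter (fun j => Q j i)).card = NQ := by
    rw [hNQ_def]
    simp_rw [Finset.card_filter]
    exact Finset.sum_comm
  have hNPNQ : NP ≤ 2 * NQ := by
    have hstep : ∀ i : Fin m, (F i).card ≤
        (Finset.univ.filter (fun j => Q i j)).card +
        (Finset.univ.filter (fun j => Q j i)).card := by
      intro i
      calc (F i).card ≤ ((Finset.univ.filter (fun j => Q i j)) ∪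
            (Finset.univ.filter (fun j => Q j i))).card := by
            apply Finset.card_le_card
            intro j hj
            rw [hF_def] at hj
            simp only [Finset.mem_filter, Finset.mem_univ, true_and] at hj
            rw [Finset.mem_union]
            simp only [Finset.mem_filter, Finset.mem_univ, true_and]
            exact hj
      _ ≤ _ := Finset.card_union_le _ _
    calc NP ≤ ∑ i : Fin m, ((Finset.univ.filter (fun j => Q i j)).card +
          (Finset.univ.filter (fun j => Q j i)).card) := Finset.sum_le_sum (fun i _ => hstep i)
    _ = NQ + NQ := by rw [Finset.sum_add_distrib, hswap]
    _ = 2 * NQ := by ring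
  have hmNQ : m * m ≤ 8 * NQ := by omega
  -- sum bound
  have hsum : (NQ : ℝ) * q ≤ ∑ i : Fin m, ∑ j : Fin m, (lcsLen (π i) (σ j) : ℝ) := by
    have hcast : (NQ : ℝ) = ∑ i : Fin m, ((Finset.univ.filter (fun j => Q i j)).card : ℝ) := by
      rw [hNQ_def]; push_cast; ring
    rw [hcast, Finset.sum_mul]
    apply Finset.sum_le_sum
    intro i _
    calc ((Finset.univ.filter (fun j => Q i j)).card : ℝ) * q
        = (Finset.univ.filter (fun j => Q i j)).card • q := by rw [nsmul_eq_mul]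
    _ ≤ ∑ j ∈ Finset.univ.filter (fun j => Q i j), (lcsLen (π i) (σ j) : ℝ) := by
        apply Finset.card_nsmul_le_sum
        intro j hj
        exact (Finset.mem_filter.mp hj).2
    _ ≤ ∑ j : Fin m, (lcsLen (π i) (σ j) : ℝ) := by
        apply Finset.sum_le_sum_of_subset_of_nonneg (Finset.filter_subset _ _)
        intro j _ _
        exact Nat.cast_nonneg _
  have hmNQ' : (m : ℝ) ^ 2 ≤ 8 * (NQ : ℝ) := by
    have : ((m * m : ℕ) : ℝ) ≤ ((8 * NQ : ℕ) : ℝ) := Nat.cast_le.mpr hmNQ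
    push_cast at this
    nlinarith [this]
  have hfinal : q * (m : ℝ) ^ 2 ≤ q * (8 * NQ) := mul_le_mul_of_nonneg_left hmNQ' hq0
  linarith
end
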